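/- On 𝔤₂₄ = 𝔥₃ × 𝔥₃ (brackets [e₁,e₄]=e₆, [e₂,e₃]=e₅) with ω = e¹∧e⁶ + e²∧e⁵ + e³∧e⁴, the almost complex structure J with J(e₁) = ψ₁₁e₁ − ((1+ψ₁₁²)/ψ₁₂)e₂, J(e₂) = ψ₁₂e₁ − ψ₁₁e₂, J(e₃) = ((ψ₁₁²−1)/(2ψ₁₁))e₃ − ((2ψ₁₁²+ψ₁₁⁴+1)/(2ψ₁₁ψ₁₂²))e₄, J(e₄) = (ψ₁₂²/(2ψ₁₁))e₃ − ((ψ₁₁²−1)/(2ψ₁₁))e₄, J(e₅) = ψ₁₁e₅ + ((1+ψ₁₁²)/ψ₁₂)e₆, J(e₆) = −ψ₁₂e₅ − ψ₁₁e₆, with ψ₁₁ ≠ 0, ψ₁₂ ≠ 0, satisfies J² = −Id, is integrable, and is compatible with ω. -/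
import Mathlib


noncomputable section

/-- The underlying space ℝ⁶ of 𝔤₂₄ = 𝔥₃ × 𝔥₃. -/
abbrev V24 : Type := Fin 6 → ℝ

/-- Bracket of 𝔤₂₄: [e₁,e₄] = e₆, [e₂,e₃] = e₅. -/
def br24 (X Y : V24) : V24 :=
  ![0, 0, 0, 0, X 1 * Y 2 - X 2 * Y 1, X 0 * Y 3 - X 3 * Y 0]

/-- ω = e¹∧e⁶ + e²∧e⁵ + e³∧e⁴. -/
def om24 (X Y : V24) : ℝ :=
  (X 0 * Y 5 - X 5 * Y 0) + (X 1 * Y 4 - X 4 * Y 1) + (X 2 * Y 3 - X 3 * Y 2)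

/-- The almost complex structure J on 𝔤₂₄ with parameters ψ₁₁ ≠ 0, ψ₁₂ ≠ 0:
J(e₁) = ψ₁₁e₁ − ((1+ψ₁₁²)/ψ₁₂)e₂, J(e₂) = ψ₁₂e₁ − ψ₁₁e₂,
J(e₃) = ((ψ₁₁²−1)/(2ψ₁₁))e₃ − ((2ψ₁₁²+ψ₁₁⁴+1)/(2ψ₁₁ψ₁₂²))e₄,
J(e₄) = (ψ₁₂²/(2ψ₁₁))e₃ − ((ψ₁₁²−1)/(2ψ₁₁))e₄,
J(e₅) = ψ₁₁e₅ + ((1+ψ₁₁²)/ψ₁₂)e₆, J(e₆) = −ψ₁₂e₅ − ψ₁₁e₆. -/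
def J24 (p q : ℝ) (X : V24) : V24 :=
  ![p * X 0 + q * X 1,
    -((1 + p ^ 2) / q) * X 0 - p * X 1,
    ((p ^ 2 - 1) / (2 * p)) * X 2 + (q ^ 2 / (2 * p)) * X 3,
    -((2 * p ^ 2 + p ^ 4 + 1) / (2 * p * q ^ 2)) * X 2 - ((p ^ 2 - 1) / (2 * p)) * X 3,
    p * X 4 - q * X 5,
    ((1 + p ^ 2) / q) * X 4 - p * X 5]

@[simp] lemma vec6_0 (a b c d e f : ℝ) : ![a,b,c,d,e,f] 0 = a := rfl
@[simp] lemma vec6_1 (a b c d e f : ℝ) : ![a,b,c,d,e,f] 1 = b := rfl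
@[simp] lemma vec6_2 (a b c d e f : ℝ) : ![a,b,c,d,e,f] 2 = c := rfl
@[simp] lemma vec6_3 (a b c d e f : ℝ) : ![a,b,c,d,e,f] 3 = d := rfl
@[simp] lemma vec6_4 (a b c d e f : ℝ) : ![a,b,c,d,e,f] 4 = e := rfl
@[simp] lemma vec6_5 (a b c d e f : ℝ) : ![a,b,c,d,e,f] 5 = f := rfl

@[simp] lemma fin6_mk0 (h : 0 < 6) : (⟨0, h⟩ : Fin 6) = 0 := rfl
@[simp] lemma fin6_mk1 (h : 1 < 6) : (⟨1, h⟩ : Fin 6) = 1 := rfl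
@[simp] lemma fin6_mk2 (h : 2 < 6) : (⟨2, h⟩ : Fin 6) = 2 := rfl
@[simp] lemma fin6_mk3 (h : 3 < 6) : (⟨3, h⟩ : Fin 6) = 3 := rfl
@[simp] lemma fin6_mk4 (h : 4 < 6) : (⟨4, h⟩ : Fin 6) = 4 := rfl
@[simp] lemma fin6_mk5 (h : 5 < 6) : (⟨5, h⟩ : Fin 6) = 5 := rfl

set_option maxHeartbeats 1600000 in
/-- for ψ₁₁ ≠ 0 and ψ₁₂ ≠ 0, J satisfies J² = −Id, is integrable,
and is compatible with ω on 𝔤₂₄. -/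
theorem g24_J_complex_compatible (p q : ℝ) (hp : p ≠ 0) (hq : q ≠ 0) :
    (∀ X : V24, J24 p q (J24 p q X) = -X) ∧
    (∀ X Y : V24,
      br24 (J24 p q X) (J24 p q Y) - br24 X Y
        - J24 p q (br24 (J24 p q X) Y) - J24 p q (br24 X (J24 p q Y)) = 0) ∧
    (∀ X Y : V24, om24 (J24 p q X) (J24 p q Y) = om24 X Y) := by
  refine ⟨?_, ?_, ?_⟩
  · intro X
    funext i
    fin_cases i <;>
      simp only [J24, vec6_0, vec6_1, vec6_2, vec6_3, vec6_4, vec6_5, Pi.neg_apply,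
        fin6_mk0, fin6_mk1, fin6_mk2, fin6_mk3, fin6_mk4, fin6_mk5] <;>
      field_simp <;> ring
  · intro X Y
    funext i
    fin_cases i <;>
      simp only [J24, br24, vec6_0, vec6_1, vec6_2, vec6_3, vec6_4, vec6_5,
        Pi.sub_apply, Pi.zero_apply,
        fin6_mk0, fin6_mk1, fin6_mk2, fin6_mk3, fin6_mk4, fin6_mk5] <;>
      field_simp <;> ring
  · intro X Y
    simp only [J24, om24, vec6_0, vec6_1, vec6_2, vec6_3, vec6_4, vec6_5]
    field_simp
    ring
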